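/- Let S and T be strings over an alphabet Σ that have at least one common letter, and let (s_1, …, s_k) be a maximal block decomposition of S with respect to T. Let X be a longest common substring of S and T. Then every occurrence S[p..q] of X in S contains the first letter of some block; that is, there exists i ∈ {1, …, k} such that the starting position of block s_i in S lies in the interval [p, q]. -/

import Mathlib

/-- A block decomposition of `S` with respect to `T`: a sequence of nonempty
strings whose concatenation is `S`, each being a substring of `T`. -/
def IsBlockDecomp {α : Type*} (T : List α) (bs : List (List α)) (S : List α) : Prop :=
  bs.flatten = S ∧ ∀ b ∈ bs, b ≠ [] ∧ b <:+: T

/-- A maximal block decomposition: additionally, the concatenation of any two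
consecutive blocks is not a substring of `T`. -/
def IsMaximalBlockDecomp {α : Type*} (T : List α) (bs : List (List α)) (S : List α) : Prop :=
  IsBlockDecomp T bs S ∧
    ∀ i, i + 1 < bs.length → ¬ (bs.getD i [] ++ bs.getD (i + 1) []) <:+: T

/-- The (0-indexed) starting position of block `i` inside the decomposed string. -/
def blockStart {α : Type*} (bs : List (List α)) (i : ℕ) : ℕ :=
  ((bs.take i).flatten).length

lemma take_drop_infix {α : Type*} (l : List α) (m n : ℕ) :
    (l.drop m).take n <:+: l :=
  ((l.drop m).take_prefix n).isInfix.trans (l.drop_suffix m).isInfix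

lemma blockStart_succ {α : Type*} (bs : List (List α)) (i : ℕ) (h : i < bs.length) :
    blockStart bs (i + 1) = blockStart bs i + (bs.getD i []).length := by
  unfold blockStart
  rw [List.take_succ, List.flatten_append, List.length_append,
      List.getD_eq_getElem _ _ h, List.getElem?_eq_getElem h]
  simp

lemma blockStart_of_le {α : Type*} (bs : List (List α)) (i : ℕ) (h : bs.length ≤ i) :
    blockStart bs i = bs.flatten.length := by
  rw [blockStart, List.take_of_length_le h]

lemma drop_blockStart {α : Type*} (bs : List (List α)) (i : ℕ) :
    bs.flatten.drop (blockStart bs i) = (bs.drop i).flatten := by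
  have h : bs.flatten = (bs.take i).flatten ++ (bs.drop i).flatten := by
    rw [← List.flatten_append, List.take_append_drop]
  rw [h, blockStart, List.drop_left]

lemma infix_block {α : Type*} (bs : List (List α)) (i off n : ℕ) (hi : i < bs.length)
    (hn : off + n ≤ (bs.getD i []).length) :
    (bs.flatten.drop (blockStart bs i + off)).take n <:+: bs.getD i [] := by
  rw [List.getD_eq_getElem _ _ hi] at hn ⊢
  have h1 : bs.flatten.drop (blockStart bs i + off) =
      (bs[i].drop off) ++ (bs.drop (i + 1)).flatten := by
    rw [← List.drop_drop, drop_blockStart, List.drop_eq_getElem_cons hi,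
        List.flatten_cons, List.drop_append_of_le_length (by omega)]
  rw [h1, List.take_append_of_le_length (by simp; omega)]
  exact take_drop_infix _ _ _

/-- If `S` and `T` share a common letter and `X` is a longest common substring of
`S` and `T`, then every occurrence of `X` in `S` (starting at 0-indexed
position `p`) contains the first letter of some block of any maximal block
decomposition of `S` with respect to `T`. -/
theorem lcs_contains_block_start {α : Type*} (S T : List α) (bs : List (List α))
    (hdec : IsMaximalBlockDecomp T bs S)
    (hcommon : ∃ ch, ch ∈ S ∧ ch ∈ T)
    (X : List α) (hXS : X <:+: S) (hXT : X <:+: T)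
    (hlcs : ∀ Y : List α, Y <:+: S → Y <:+: T → Y.length ≤ X.length)
    (p : ℕ) (hp : p + X.length ≤ S.length) (hocc : (S.drop p).take X.length = X) :
    ∃ i < bs.length, p ≤ blockStart bs i ∧ blockStart bs i < p + X.length := by
  obtain ⟨⟨hflat, hblocks⟩, _⟩ := hdec
  set L := X.length with hL
  -- X is nonempty
  have hLpos : 0 < L := by
    obtain ⟨ch, hchS, hchT⟩ := hcommon
    obtain ⟨s, t, rfl⟩ := List.append_of_mem hchS
    obtain ⟨s', t', rfl⟩ := List.append_of_mem hchT
    have h1 : [ch] <:+: s ++ ch :: t := ⟨s, t, by simp⟩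
    have h2 : [ch] <:+: s' ++ ch :: t' := ⟨s', t', by simp⟩
    have := hlcs [ch] h1 h2
    simp at this
    omega
  -- find the block containing position p
  have hSlen : blockStart bs bs.length = S.length := by
    rw [blockStart_of_le bs _ le_rfl, hflat]
  have hex : ∃ j, ¬ blockStart bs j ≤ p := ⟨bs.length, by omega⟩
  classical
  set m := Nat.find hex with hm
  have hmspec : ¬ blockStart bs m ≤ p := Nat.find_spec hex
  have hm0 : 0 < m := by
    rcases Nat.eq_zero_or_pos m with h | h
    · exfalso; apply hmspec; rw [h]; simp [blockStart]
    · exact h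
  set i := m - 1 with hi
  have him : i < m := by omega
  have hile : blockStart bs i ≤ p := by
    by_contra h
    have : m ≤ i := Nat.find_le h
    omega
  have hisucc : blockStart bs (i + 1) = blockStart bs m := by rw [show i + 1 = m by omega]
  have hilen : i < bs.length := by
    by_contra h
    push_neg at h
    have := blockStart_of_le bs i h
    rw [hflat] at this
    omega
  -- case on whether blockStart bs i = p
  rcases eq_or_lt_of_le hile with heq | hlt
  · exact ⟨i, hilen, by omega, by omega⟩
  -- case on whether blockStart bs (i+1) < p + L
  by_cases hcase : blockStart bs (i + 1) < p + L
  · refine ⟨i + 1, ?_, by omega, hcase⟩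
    by_contra h
    push_neg at h
    have := blockStart_of_le bs (i + 1) h
    rw [hflat] at this
    omega
  push_neg at hcase
  -- derive contradiction: extend X one position to the left inside block i
  exfalso
  have hsuccform := blockStart_succ bs i hilen
  set off := p - 1 - blockStart bs i with hoff
  have hoffn : off + (L + 1) ≤ (bs.getD i []).length := by omega
  have hstart : blockStart bs i + off = p - 1 := by omega
  have hinf : (bs.flatten.drop (p - 1)).take (L + 1) <:+: bs.getD i [] := by
    rw [← hstart]
    exact infix_block bs i off (L + 1) hilen hoffn
  rw [hflat] at hinf
  have hbT : bs.getD i [] <:+: T := by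
    rw [List.getD_eq_getElem _ _ hilen]
    exact (hblocks _ (List.getElem_mem hilen)).2
  have hinfT : (S.drop (p - 1)).take (L + 1) <:+: T := hinf.trans hbT
  have hinfS : (S.drop (p - 1)).take (L + 1) <:+: S := take_drop_infix S _ _
  have hlen : ((S.drop (p - 1)).take (L + 1)).length = L + 1 := by
    rw [List.length_take, List.length_drop]
    omega
  have := hlcs _ hinfS hinfT
  omega
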